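/- Maupertuis value of the circular-arc modification of the collision-ejection solution: let T > 0, m₁ > 0, α ∈ [1,2), φ ∈ (0, 2π], and let x̄ be the collision-ejection solution with φ₋ = 0, φ₊ = φ. For ρ > 0 set t_ρ = μ^{−1} ρ^{(2+α)/2} and ω_ρ = φ/(2 t_ρ), and define x_ρ(t) = x̄(t) for t ∈ [−T, −t_ρ] ∪ [t_ρ, T] and x_ρ(t) = ρ·e^{i ω_ρ (t + t_ρ)} for t ∈ [−t_ρ, t_ρ]. Then there exist C > 0 and ρ₀ > 0 such that |M̄(x_ρ) − M̄(x̄)| ≤ C·ρ^{(2−α)/2} for all ρ ∈ (0, ρ₀); in particular M̄(x_ρ) → M̄(x̄) as ρ → 0⁺. -/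

import Mathlib

open Filter Topology MeasureTheory

/-- `μ = (α+2)·√(m₁/(2α))`. -/
noncomputable def muKepler (m₁ α : ℝ) : ℝ := (α + 2) * Real.sqrt (m₁ / (2 * α))

/-- The parabolic collision-ejection solution with angles `φ₋` (for `t ≤ 0`) and
`φ₊` (for `t ≥ 0`). -/
noncomputable def xbarCE (m₁ α φm φp : ℝ) (t : ℝ) : ℂ :=
  (((muKepler m₁ α * |t|) ^ (2 / (α + 2)) : ℝ) : ℂ) *
    Complex.exp (((if 0 ≤ t then φp else φm : ℝ) : ℂ) * Complex.I)

/-- `t_ρ = μ⁻¹ ρ^{(2+α)/2}`. -/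
noncomputable def tRho (m₁ α ρ : ℝ) : ℝ := ρ ^ ((2 + α) / 2) / muKepler m₁ α

/-- The circular-arc modification of the collision-ejection solution `xbarCE m₁ α 0 φ`:
on `[-t_ρ, t_ρ]` it is the circular arc `ρ·e^{iω_ρ(t+t_ρ)}` with `ω_ρ = φ/(2t_ρ)`, and
elsewhere it coincides with the collision-ejection solution. -/
noncomputable def xRho (m₁ α φ ρ : ℝ) (t : ℝ) : ℂ :=
  if |t| ≤ tRho m₁ α ρ then
    (ρ : ℂ) * Complex.exp (((φ / (2 * tRho m₁ α ρ) * (t + tRho m₁ α ρ) : ℝ) : ℂ) * Complex.I)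
  else xbarCE m₁ α 0 φ t

/-- The zero-energy Maupertuis functional on `[-T, T]`. -/
noncomputable def MbarFun (m₁ α T : ℝ) (x : ℝ → ℂ) : ℝ :=
  (∫ t in (-T)..T, (1 / 2) * ‖deriv x t‖ ^ 2) * (∫ t in (-T)..T, m₁ / (α * ‖x t‖ ^ α))

open intervalIntegral

lemma norm_xbarCE {m₁ α : ℝ} (hμ : 0 ≤ muKepler m₁ α) (φm φp t : ℝ) :
    ‖xbarCE m₁ α φm φp t‖ = (muKepler m₁ α) ^ (2/(α+2)) * |t| ^ (2/(α+2)) := by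
  unfold xbarCE
  rw [norm_mul, Complex.norm_real, Real.norm_eq_abs, Complex.norm_exp_ofReal_mul_I, mul_one,
    abs_of_nonneg (Real.rpow_nonneg (by positivity) _), Real.mul_rpow hμ (abs_nonneg t)]

lemma norm_deriv_xbarCE {m₁ α : ℝ} (φ : ℝ) (hμ : 0 < muKepler m₁ α)
    (hq : 0 ≤ 2/(α+2)) {t : ℝ} (ht : t ≠ 0) :
    ‖deriv (xbarCE m₁ α 0 φ) t‖
      = (muKepler m₁ α) ^ (2/(α+2)) * (2/(α+2)) * |t| ^ (2/(α+2) - 1) := by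
  set μ := muKepler m₁ α with hμdef
  set q : ℝ := 2/(α+2) with hqdef
  rcases ht.lt_or_gt with htn | htp
  · -- t < 0
    have hneg : HasDerivAt (fun s : ℝ => -s) (-1 : ℝ) t := by
      exact hasDerivAt_neg t
    have h1 : HasDerivAt (fun s : ℝ => (-s) ^ q) (q * (-t) ^ (q-1) * (-1)) t :=
      (Real.hasDerivAt_rpow_const (p := q) (Or.inl (neg_ne_zero.mpr ht))).comp t hneg
    have h1' : HasDerivAt (fun s : ℝ => μ ^ q * (-s) ^ q) (μ ^ q * (q * (-t) ^ (q-1) * (-1))) t :=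
      h1.const_mul _
    have h2 := (h1'.ofReal_comp).mul_const (Complex.exp (((0:ℝ):ℂ) * Complex.I))
    have heq : xbarCE m₁ α 0 φ =ᶠ[𝓝 t]
        (fun s : ℝ => ((μ ^ q * (-s) ^ q : ℝ) : ℂ) * Complex.exp (((0:ℝ):ℂ) * Complex.I)) := by
      filter_upwards [Iio_mem_nhds htn] with s hs
      unfold xbarCE
      rw [if_neg (not_le.mpr hs), abs_of_neg hs, Real.mul_rpow hμ.le (by have := Set.mem_Iio.mp hs; linarith : (0:ℝ) ≤ -s)]
    have hnn : (0:ℝ) ≤ μ ^ q * (q * (-t) ^ (q-1)) := by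
      have : (0:ℝ) < -t := by linarith
      positivity
    rw [(h2.congr_of_eventuallyEq heq).deriv, norm_mul, Complex.norm_real, Real.norm_eq_abs,
      Complex.norm_exp_ofReal_mul_I, mul_one, abs_of_neg htn]
    have : μ ^ q * (q * (-t) ^ (q - 1) * (-1)) = -(μ ^ q * (q * (-t) ^ (q-1))) := by ring
    rw [this, abs_neg, abs_of_nonneg hnn]
    ring
  · -- t > 0
    have h1 : HasDerivAt (fun s : ℝ => μ ^ q * s ^ q) (μ ^ q * (q * t ^ (q-1))) t :=
      (Real.hasDerivAt_rpow_const (Or.inl ht)).const_mul _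
    have h2 := (h1.ofReal_comp).mul_const (Complex.exp (((φ:ℝ):ℂ) * Complex.I))
    have heq : xbarCE m₁ α 0 φ =ᶠ[𝓝 t]
        (fun s : ℝ => ((μ ^ q * s ^ q : ℝ) : ℂ) * Complex.exp (((φ:ℝ):ℂ) * Complex.I)) := by
      filter_upwards [Ioi_mem_nhds htp] with s hs
      unfold xbarCE
      rw [if_pos (le_of_lt hs), abs_of_pos hs, Real.mul_rpow hμ.le hs.le]
    rw [(h2.congr_of_eventuallyEq heq).deriv, norm_mul, Complex.norm_real, Real.norm_eq_abs,
      Complex.norm_exp_ofReal_mul_I, mul_one,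
      abs_of_nonneg (by positivity), abs_of_pos htp]
    ring

lemma norm_deriv_xRho_arc {m₁ α φ ρ : ℝ} (hρ : 0 ≤ ρ) (hφ : 0 ≤ φ)
    (htρ : 0 < tRho m₁ α ρ) {t : ℝ} (ht : |t| < tRho m₁ α ρ) :
    ‖deriv (xRho m₁ α φ ρ) t‖ = ρ * (φ / (2 * tRho m₁ α ρ)) := by
  set τ := tRho m₁ α ρ with hτ
  set ω : ℝ := φ / (2 * τ) with hω
  have hb : HasDerivAt (fun s : ℝ => (ω * (s + τ) : ℝ)) ω t := by
    simpa using ((hasDerivAt_id t).add_const τ).const_mul ω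
  have h1 : HasDerivAt (fun s : ℝ => ((ω * (s + τ) : ℝ) : ℂ) * Complex.I)
      ((ω : ℂ) * Complex.I) t := (hb.ofReal_comp).mul_const Complex.I
  have harc : HasDerivAt (fun s : ℝ => (ρ : ℂ) * Complex.exp (((ω * (s + τ) : ℝ) : ℂ) * Complex.I))
      ((ρ : ℂ) * (Complex.exp (((ω * (t + τ) : ℝ) : ℂ) * Complex.I) * ((ω : ℂ) * Complex.I))) t :=
    (h1.cexp).const_mul _
  have heq : xRho m₁ α φ ρ =ᶠ[𝓝 t]
      (fun s : ℝ => (ρ : ℂ) * Complex.exp (((ω * (s + τ) : ℝ) : ℂ) * Complex.I)) := by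
    have hopen : {s : ℝ | |s| < τ} ∈ 𝓝 t :=
      (isOpen_lt continuous_abs continuous_const).mem_nhds ht
    filter_upwards [hopen] with s hs
    unfold xRho
    rw [if_pos (le_of_lt hs)]
  rw [(harc.congr_of_eventuallyEq heq).deriv]
  rw [norm_mul, norm_mul, norm_mul, Complex.norm_real, Complex.norm_real,
    Real.norm_eq_abs, Real.norm_eq_abs,
    Complex.norm_exp_ofReal_mul_I, Complex.norm_I, one_mul, mul_one,
    abs_of_nonneg hρ, abs_of_nonneg (div_nonneg hφ (by linarith))]

lemma deriv_xRho_outside {m₁ α φ ρ : ℝ} {t : ℝ} (ht : tRho m₁ α ρ < |t|) :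
    deriv (xRho m₁ α φ ρ) t = deriv (xbarCE m₁ α 0 φ) t := by
  apply Filter.EventuallyEq.deriv_eq
  have hopen : {s : ℝ | tRho m₁ α ρ < |s|} ∈ 𝓝 t :=
    (isOpen_lt continuous_const continuous_abs).mem_nhds ht
  filter_upwards [hopen] with s hs
  unfold xRho
  rw [if_neg (not_le.mpr hs)]

lemma norm_xRho_arc {m₁ α φ ρ : ℝ} (hρ : 0 ≤ ρ) {t : ℝ} (ht : |t| ≤ tRho m₁ α ρ) :
    ‖xRho m₁ α φ ρ t‖ = ρ := by
  unfold xRho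
  rw [if_pos ht, norm_mul, Complex.norm_real, Real.norm_eq_abs,
    Complex.norm_exp_ofReal_mul_I, mul_one, abs_of_nonneg hρ]


lemma ae_ne_unused (a : ℝ) : ∀ᵐ t : ℝ, t ≠ a := by
  rw [ae_iff]
  simpa [not_not, Set.setOf_eq_eq_singleton] using measure_singleton a

lemma II_abs_rpow {q : ℝ} (hq : -1 < q) (a b : ℝ) :
    IntervalIntegrable (fun t : ℝ => |t| ^ q) volume a b := by
  have key : ∀ b : ℝ, 0 ≤ b → IntervalIntegrable (fun t : ℝ => |t| ^ q) volume 0 b := by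
    intro b hb
    refine (intervalIntegrable_rpow' (a := 0) (b := b) hq).congr_ae ?_
    refine ((ae_restrict_iff' measurableSet_uIoc).mpr (ae_of_all _ ?_))
    intro t ht
    rw [Set.uIoc_of_le hb] at ht
    simp only []
    rw [abs_of_pos ht.1]
  have key2 : ∀ b : ℝ, IntervalIntegrable (fun t : ℝ => |t| ^ q) volume 0 b := by
    intro b
    rcases le_or_gt 0 b with hb | hb
    · exact key b hb
    · have := (IntervalIntegrable.iff_comp_neg (f := fun t : ℝ => |t| ^ q)
        (a := 0) (b := -b)).mp (key (-b) (by linarith))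
      simpa using this
  exact (key2 a).symm.trans (key2 b)

lemma int_abs_rpow {q : ℝ} (hq : -1 < q) {A : ℝ} (hA : 0 ≤ A) :
    ∫ t in (-A)..A, |t| ^ q = 2 * (A ^ (q + 1) / (q + 1)) := by
  have h0 : ∫ t in (0:ℝ)..A, |t| ^ q = A ^ (q + 1) / (q + 1) := by
    rw [intervalIntegral.integral_congr_ae (g := fun t : ℝ => t ^ q) ?_]
    · rw [integral_rpow (Or.inl hq), Real.zero_rpow (by linarith), sub_zero]
    · refine ae_of_all _ fun t ht => ?_
      rw [Set.uIoc_of_le hA] at ht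
      rw [abs_of_pos ht.1]
  have hneg : ∫ t in (-A)..(0:ℝ), |t| ^ q = A ^ (q + 1) / (q + 1) := by
    have := integral_comp_neg (a := (0:ℝ)) (b := A) (fun t : ℝ => |t| ^ q)
    simp only [abs_neg, neg_zero] at this
    rw [← this, h0]
  rw [← integral_add_adjacent_intervals (II_abs_rpow hq (-A) 0) (II_abs_rpow hq 0 A),
    h0, hneg]
  ring

lemma ae_ne'' (a : ℝ) : ∀ᵐ t : ℝ, t ≠ a := by
  rw [MeasureTheory.ae_iff]
  simpa [not_not, Set.setOf_eq_eq_singleton] using measure_singleton a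

lemma split_integral {F g : ℝ → ℝ} {cA T τ : ℝ} (hτ0 : 0 < τ) (hτT : τ < T)
    (hg : ∀ a b : ℝ, IntervalIntegrable g MeasureTheory.volume a b)
    (hout : ∀ t : ℝ, τ < |t| → F t = g t)
    (hmid : ∀ t : ℝ, |t| < τ → F t = cA) :
    ∫ t in (-T)..T, F t =
      (∫ t in (-T)..T, g t) - (∫ t in (-τ)..τ, g t) + 2 * τ * cA := by
  have hae1 : ∀ᵐ t : ℝ, t ∈ Set.uIoc (-T) (-τ) → F t = g t := by
    filter_upwards [ae_ne'' (-τ)] with t htne hmem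
    rw [Set.uIoc_of_le (by linarith : -T ≤ -τ)] at hmem
    have h1 : t < -τ := lt_of_le_of_ne hmem.2 htne
    exact hout t (by rw [abs_of_neg (by linarith)]; linarith)
  have hae3 : ∀ᵐ t : ℝ, t ∈ Set.uIoc τ T → F t = g t := by
    refine MeasureTheory.ae_of_all _ fun t hmem => ?_
    rw [Set.uIoc_of_le hτT.le] at hmem
    exact hout t (by rw [abs_of_pos (lt_trans hτ0 hmem.1)]; exact hmem.1)
  have hae2 : ∀ᵐ t : ℝ, t ∈ Set.uIoc (-τ) τ → F t = cA := by
    filter_upwards [ae_ne'' τ] with t htne hmem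
    rw [Set.uIoc_of_le (by linarith : -τ ≤ τ)] at hmem
    have h1 : t < τ := lt_of_le_of_ne hmem.2 htne
    exact hmid t (abs_lt.mpr ⟨by linarith [hmem.1], h1⟩)
  have hEq1 : F =ᵐ[MeasureTheory.volume.restrict (Set.uIoc (-T) (-τ))] g :=
    (MeasureTheory.ae_restrict_iff' measurableSet_uIoc).mpr hae1
  have hEq2 : F =ᵐ[MeasureTheory.volume.restrict (Set.uIoc (-τ) τ)] (fun _ => cA) :=
    (MeasureTheory.ae_restrict_iff' measurableSet_uIoc).mpr hae2
  have hEq3 : F =ᵐ[MeasureTheory.volume.restrict (Set.uIoc τ T)] g :=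
    (MeasureTheory.ae_restrict_iff' measurableSet_uIoc).mpr hae3
  have hF1 : IntervalIntegrable F MeasureTheory.volume (-T) (-τ) := (hg _ _).congr_ae hEq1.symm
  have hF2 : IntervalIntegrable F MeasureTheory.volume (-τ) τ :=
    (_root_.intervalIntegrable_const).congr_ae hEq2.symm
  have hF3 : IntervalIntegrable F MeasureTheory.volume τ T := (hg _ _).congr_ae hEq3.symm
  have e1 : ∫ t in (-T)..(-τ), F t = ∫ t in (-T)..(-τ), g t :=
    intervalIntegral.integral_congr_ae hae1
  have e2 : ∫ t in (-τ)..τ, F t = 2 * τ * cA := by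
    rw [intervalIntegral.integral_congr_ae hae2, intervalIntegral.integral_const,
      smul_eq_mul]
    ring
  have e3 : ∫ t in τ..T, F t = ∫ t in τ..T, g t := intervalIntegral.integral_congr_ae hae3
  have s1 := intervalIntegral.integral_add_adjacent_intervals hF1 hF2
  have s2 := intervalIntegral.integral_add_adjacent_intervals (hF1.trans hF2) hF3
  have g1 := intervalIntegral.integral_add_adjacent_intervals (hg (-T) (-τ)) (hg (-τ) τ)
  have g2 := intervalIntegral.integral_add_adjacent_intervals
    ((hg (-T) (-τ)).trans (hg (-τ) τ)) (hg τ T)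
  linarith


set_option maxHeartbeats 2000000

/-- Maupertuis value of the circular-arc modification of the collision-ejection
solution. -/
theorem stmt_18 (T m₁ α φ : ℝ) (hT : 0 < T) (hm : 0 < m₁) (hα1 : 1 ≤ α) (hα2 : α < 2)
    (hφ0 : 0 < φ) (hφ : φ ≤ 2 * Real.pi) :
    (∃ C : ℝ, 0 < C ∧ ∃ ρ₀ : ℝ, 0 < ρ₀ ∧ ∀ ρ : ℝ, 0 < ρ → ρ < ρ₀ →
      |MbarFun m₁ α T (xRho m₁ α φ ρ) - MbarFun m₁ α T (xbarCE m₁ α 0 φ)|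
        ≤ C * ρ ^ ((2 - α) / 2)) ∧
    Filter.Tendsto (fun ρ : ℝ => MbarFun m₁ α T (xRho m₁ α φ ρ)) (𝓝[>] (0 : ℝ))
      (𝓝 (MbarFun m₁ α T (xbarCE m₁ α 0 φ))) := by
  have hα0 : (0:ℝ) < α := by linarith
  have hα2' : (0:ℝ) < α + 2 := by linarith
  have hμ : 0 < muKepler m₁ α := by
    have h1 : 0 < Real.sqrt (m₁ / (2 * α)) := Real.sqrt_pos.mpr (by positivity)
    unfold muKepler
    positivity
  set μ := muKepler m₁ α with hμdef
  set q : ℝ := 2 / (α + 2) with hqdef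
  have hq0 : 0 < q := by positivity
  set e : ℝ := 2 * q - 2 with hedef
  have heneg : e = -(2 * α / (α + 2)) := by
    rw [hedef, hqdef]; field_simp; ring
  have he1p : 0 < e + 1 := by
    have h4 : 1 < 2 * q := by
      rw [hqdef, show 2 * (2 / (α + 2)) = 4 / (α + 2) by ring, lt_div_iff₀ hα2']
      linarith
    rw [hedef]; linarith
  have he1m : -1 < e := by linarith
  set s : ℝ := (2 - α) / 2 with hsdef
  have hs0 : 0 < s := by rw [hsdef]; linarith
  have hexp : (2 + α) / 2 * (e + 1) = s := by
    rw [hedef, hqdef, hsdef]; field_simp; ring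
  set c : ℝ := μ ^ q * q with hcdef
  have hc0 : 0 < c := by positivity
  set gK : ℝ → ℝ := fun t => c ^ 2 / 2 * |t| ^ e with hgKdef
  set CP : ℝ := m₁ / (α * μ ^ (q * α)) with hCPdef
  set gP : ℝ → ℝ := fun t => CP * |t| ^ e with hgPdef
  have hqα : q * α = -e := by rw [heneg, hqdef]; field_simp
  -- pointwise identities for the unperturbed solution
  have hgK_eq : ∀ t : ℝ, t ≠ 0 → (1 / 2 : ℝ) * ‖deriv (xbarCE m₁ α 0 φ) t‖ ^ 2 = gK t := by
    intro t ht
    rw [norm_deriv_xbarCE φ hμ (by positivity) ht, ← hqdef]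
    have habs : (|t| ^ (q - 1)) ^ (2:ℕ) = |t| ^ e := by
      rw [← Real.rpow_natCast (|t| ^ (q - 1)) 2, ← Real.rpow_mul (abs_nonneg t)]
      rw [hedef]; norm_num; congr 1; ring
    simp only [hgKdef, hcdef]
    rw [mul_pow, mul_pow, habs]
    ring
  have hgP_eq : ∀ t : ℝ, m₁ / (α * ‖xbarCE m₁ α 0 φ t‖ ^ α) = gP t := by
    intro t
    rw [norm_xbarCE hμ.le, ← hqdef, Real.mul_rpow (Real.rpow_nonneg hμ.le _)
      (Real.rpow_nonneg (abs_nonneg t) _), ← Real.rpow_mul hμ.le, ← Real.rpow_mul (abs_nonneg t),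
      hqα, Real.rpow_neg (abs_nonneg t)]
    simp only [hgPdef, hCPdef, hqα]
    rw [div_eq_mul_inv, div_eq_mul_inv, mul_inv, mul_inv, inv_inv]
    ring
  have hgK_int : ∀ a b : ℝ, IntervalIntegrable gK volume a b := fun a b =>
    (II_abs_rpow he1m a b).const_mul _
  have hgP_int : ∀ a b : ℝ, IntervalIntegrable gP volume a b := fun a b =>
    (II_abs_rpow he1m a b).const_mul _
  set Kbar : ℝ := ∫ t in (-T)..T, (1 / 2 : ℝ) * ‖deriv (xbarCE m₁ α 0 φ) t‖ ^ 2 with hKbardef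
  set Pbar : ℝ := ∫ t in (-T)..T, m₁ / (α * ‖xbarCE m₁ α 0 φ t‖ ^ α) with hPbardef
  have hKbar_eq : Kbar = ∫ t in (-T)..T, gK t := by
    rw [hKbardef]
    apply intervalIntegral.integral_congr_ae
    filter_upwards [ae_ne'' 0] with t ht0 _
    exact hgK_eq t ht0
  have hPbar_eq : Pbar = ∫ t in (-T)..T, gP t := by
    rw [hPbardef]
    apply intervalIntegral.integral_congr_ae
    exact ae_of_all _ fun t _ => hgP_eq t
  set aK : ℝ := φ ^ 2 * μ / 4 - c ^ 2 / ((e + 1) * μ ^ (e + 1)) with haKdef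
  set bP : ℝ := 2 * m₁ / (α * μ) - 2 * CP / ((e + 1) * μ ^ (e + 1)) with hbPdef
  have hMbar : MbarFun m₁ α T (xbarCE m₁ α 0 φ) = Kbar * Pbar := by
    rw [MbarFun, hKbardef, hPbardef]
  -- the per-ρ identity
  have key : ∀ ρ : ℝ, 0 < ρ → tRho m₁ α ρ < T →
      MbarFun m₁ α T (xRho m₁ α φ ρ) = (Kbar + aK * ρ ^ s) * (Pbar + bP * ρ ^ s) := by
    intro ρ hρ0 hτT
    set τ := tRho m₁ α ρ with hτdef
    have hτval : τ = ρ ^ ((2 + α) / 2) / μ := rfl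
    have hτ0 : 0 < τ := by rw [hτval]; positivity
    have hτpow : τ ^ (e + 1) = ρ ^ s / μ ^ (e + 1) := by
      rw [hτval, Real.div_rpow (Real.rpow_nonneg hρ0.le _) hμ.le, ← Real.rpow_mul hρ0.le, hexp]
    -- kinetic part
    have hKIN : (∫ t in (-T)..T, (1 / 2 : ℝ) * ‖deriv (xRho m₁ α φ ρ) t‖ ^ 2)
        = Kbar + aK * ρ ^ s := by
      have hout : ∀ t : ℝ, τ < |t| → (1 / 2 : ℝ) * ‖deriv (xRho m₁ α φ ρ) t‖ ^ 2 = gK t := by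
        intro t ht
        rw [deriv_xRho_outside ht]
        exact hgK_eq t (fun h => by rw [h] at ht; simp at ht; linarith)
      have hmid : ∀ t : ℝ, |t| < τ →
          (1 / 2 : ℝ) * ‖deriv (xRho m₁ α φ ρ) t‖ ^ 2 = (1/2) * (ρ * (φ / (2 * τ))) ^ 2 := by
        intro t ht
        rw [norm_deriv_xRho_arc hρ0.le hφ0.le hτ0 ht]
      rw [split_integral hτ0 hτT hgK_int hout hmid]
      have hmidK : (∫ t in (-τ)..τ, gK t) = c ^ 2 / ((e + 1) * μ ^ (e + 1)) * ρ ^ s := by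
        rw [hgKdef]
        rw [intervalIntegral.integral_const_mul, int_abs_rpow he1m hτ0.le, hτpow]
        have hμe : μ ^ (e + 1) ≠ 0 := ne_of_gt (Real.rpow_pos_of_pos hμ _)
        field_simp
      have harcK : 2 * τ * ((1/2) * (ρ * (φ / (2 * τ))) ^ 2) = φ ^ 2 * μ / 4 * ρ ^ s := by
        have hτne : τ ≠ 0 := ne_of_gt hτ0
        have hρe : ρ ^ ((2 + α) / 2) ≠ 0 := ne_of_gt (Real.rpow_pos_of_pos hρ0 _)
        have key2 : (ρ:ℝ) ^ (2:ℕ) = ρ ^ s * ρ ^ ((2 + α) / 2) := by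
          rw [← Real.rpow_natCast ρ 2, ← Real.rpow_add hρ0]
          congr 1; rw [hsdef]; ring
        have h1 : 2 * τ * ((1/2) * (ρ * (φ / (2 * τ))) ^ 2) = φ ^ 2 / 4 * ((ρ:ℝ) ^ (2:ℕ) / τ) := by
          field_simp
          ring
        rw [h1, key2, hτval]
        field_simp
      rw [hmidK, harcK, ← hKbar_eq, haKdef]
      ring
    -- potential part
    have hPOT : (∫ t in (-T)..T, m₁ / (α * ‖xRho m₁ α φ ρ t‖ ^ α))
        = Pbar + bP * ρ ^ s := by
      have hout : ∀ t : ℝ, τ < |t| → m₁ / (α * ‖xRho m₁ α φ ρ t‖ ^ α) = gP t := by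
        intro t ht
        have : xRho m₁ α φ ρ t = xbarCE m₁ α 0 φ t := by
          unfold xRho; rw [if_neg (not_le.mpr ht)]
        rw [this]; exact hgP_eq t
      have hmid : ∀ t : ℝ, |t| < τ →
          m₁ / (α * ‖xRho m₁ α φ ρ t‖ ^ α) = m₁ / (α * ρ ^ α) := by
        intro t ht
        rw [norm_xRho_arc hρ0.le ht.le]
      rw [split_integral hτ0 hτT hgP_int hout hmid]
      have hmidP : (∫ t in (-τ)..τ, gP t) = 2 * CP / ((e + 1) * μ ^ (e + 1)) * ρ ^ s := by
        rw [hgPdef]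
        rw [intervalIntegral.integral_const_mul, int_abs_rpow he1m hτ0.le, hτpow]
        have hμe : μ ^ (e + 1) ≠ 0 := ne_of_gt (Real.rpow_pos_of_pos hμ _)
        field_simp
      have harcP : 2 * τ * (m₁ / (α * ρ ^ α)) = 2 * m₁ / (α * μ) * ρ ^ s := by
        have hρa : ρ ^ (α:ℝ) ≠ 0 := ne_of_gt (Real.rpow_pos_of_pos hρ0 _)
        have keyP : ρ ^ ((2 + α) / 2) = ρ ^ s * ρ ^ (α:ℝ) := by
          rw [← Real.rpow_add hρ0]
          congr 1; rw [hsdef]; ring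
        rw [hτval, keyP]
        field_simp
      rw [hmidP, harcP, ← hPbar_eq, hbPdef]
      ring
    rw [MbarFun, hKIN, hPOT]
  -- part 1 : the explicit bound
  have h1 : ∃ C : ℝ, 0 < C ∧ ∃ ρ₀ : ℝ, 0 < ρ₀ ∧ ∀ ρ : ℝ, 0 < ρ → ρ < ρ₀ →
      |MbarFun m₁ α T (xRho m₁ α φ ρ) - MbarFun m₁ α T (xbarCE m₁ α 0 φ)|
        ≤ C * ρ ^ ((2 - α) / 2) := by
    refine ⟨|aK * Pbar| + |bP * Kbar| + |aK * bP| + 1, by positivity,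
      min 1 ((μ * T) ^ q), lt_min one_pos (Real.rpow_pos_of_pos (by positivity) q), ?_⟩
    intro ρ hρ0 hρlt
    have hρ1 : ρ < 1 := lt_of_lt_of_le hρlt (min_le_left _ _)
    have hτT : tRho m₁ α ρ < T := by
      have h := Real.rpow_lt_rpow hρ0.le (lt_of_lt_of_le hρlt (min_le_right _ _))
        (by positivity : (0:ℝ) < (2 + α) / 2)
      rw [← Real.rpow_mul (by positivity : (0:ℝ) ≤ μ * T),
        show q * ((2 + α) / 2) = 1 by rw [hqdef]; field_simp; ring, Real.rpow_one] at h
      show ρ ^ ((2 + α) / 2) / μ < T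
      rw [div_lt_iff₀ hμ]
      linarith
    rw [key ρ hρ0 hτT, hMbar, ← hsdef]
    have hρsnn : (0:ℝ) ≤ ρ ^ s := Real.rpow_nonneg hρ0.le _
    have hρs1 : ρ ^ s ≤ 1 := Real.rpow_le_one hρ0.le hρ1.le hs0.le
    have hexpand : (Kbar + aK * ρ ^ s) * (Pbar + bP * ρ ^ s) - Kbar * Pbar
        = (aK * Pbar + bP * Kbar) * ρ ^ s + aK * bP * (ρ ^ s * ρ ^ s) := by ring
    rw [hexpand]
    have t1 : |(aK * Pbar + bP * Kbar) * ρ ^ s| ≤ (|aK * Pbar| + |bP * Kbar|) * ρ ^ s := by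
      rw [abs_mul, abs_of_nonneg hρsnn]
      exact mul_le_mul_of_nonneg_right (abs_add_le _ _) hρsnn
    have t2 : |aK * bP * (ρ ^ s * ρ ^ s)| ≤ |aK * bP| * ρ ^ s := by
      rw [abs_mul, abs_of_nonneg (mul_nonneg hρsnn hρsnn)]
      exact mul_le_mul_of_nonneg_left (by nlinarith) (abs_nonneg _)
    calc |(aK * Pbar + bP * Kbar) * ρ ^ s + aK * bP * (ρ ^ s * ρ ^ s)|
        ≤ |(aK * Pbar + bP * Kbar) * ρ ^ s| + |aK * bP * (ρ ^ s * ρ ^ s)| := abs_add_le _ _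
      _ ≤ (|aK * Pbar| + |bP * Kbar|) * ρ ^ s + |aK * bP| * ρ ^ s := add_le_add t1 t2
      _ ≤ (|aK * Pbar| + |bP * Kbar| + |aK * bP| + 1) * ρ ^ s := by nlinarith
  refine ⟨h1, ?_⟩
  obtain ⟨C, hC, ρ₀, hρ₀, hbound⟩ := h1
  have htend0 : Tendsto (fun ρ : ℝ => C * ρ ^ s) (𝓝[>] (0:ℝ)) (𝓝 0) := by
    have hc : ContinuousAt (fun x : ℝ => x ^ s) 0 :=
      Real.continuousAt_rpow_const 0 s (Or.inr hs0.le)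
    have h : Tendsto (fun x : ℝ => x ^ s) (𝓝[>] (0:ℝ)) (𝓝 ((0:ℝ) ^ s)) :=
      hc.tendsto.mono_left nhdsWithin_le_nhds
    rw [Real.zero_rpow hs0.ne'] at h
    simpa using h.const_mul C
  have hev : ∀ᶠ ρ in 𝓝[>] (0:ℝ),
      ‖MbarFun m₁ α T (xRho m₁ α φ ρ) - MbarFun m₁ α T (xbarCE m₁ α 0 φ)‖ ≤ C * ρ ^ s := by
    filter_upwards [Ioo_mem_nhdsGT_of_mem (⟨le_refl (0:ℝ), hρ₀⟩ : (0:ℝ) ∈ Set.Ico 0 ρ₀)]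
      with ρ hρ
    rw [Real.norm_eq_abs]
    exact hbound ρ hρ.1 hρ.2
  have hsq := squeeze_zero_norm' hev htend0
  have := hsq.add_const (MbarFun m₁ α T (xbarCE m₁ α 0 φ))
  simpa using this
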